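/- For every α ≥ 2, the vector (1, 2, ..., 2) of length α (first entry 1, all other entries 2) is uniquely realized by the path P_{2α−1}: the path on 2α−1 vertices is a cop-win graph whose rank cardinality vector is (1, 2, ..., 2), and every cop-win graph whose rank cardinality vector is (1, 2, ..., 2) of length α is isomorphic to P_{2α−1}. -/

import Mathlib

namespace CopsRobbers

variable {V : Type*}

/-- The closed neighborhood of `v` within the vertex set `S` (graphs are reflexive,
so `v` itself belongs to its closed neighborhood). -/
def closedNbhd (G : SimpleGraph V) (S : Set V) (v : V) : Set V :=
  {u | u ∈ S ∧ (u = v ∨ G.Adj u v)}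

/-- `v` is a strict corner of the subgraph induced on `S`: some other vertex `w ∈ S`
strictly corners `v`, i.e. `N[v] ⊊ N[w]` within `S`. -/
def StrictCorner (G : SimpleGraph V) (S : Set V) (v : V) : Prop :=
  v ∈ S ∧ ∃ w ∈ S, w ≠ v ∧ closedNbhd G S v ⊂ closedNbhd G S w

/-- The remaining vertex sets of the corner ranking procedure (0-indexed auxiliary
version): at each step all current strict corners are removed. -/
def stageAux (G : SimpleGraph V) : ℕ → Set V
  | 0 => Set.univ
  | n + 1 => stageAux G n \ {v | StrictCorner G (stageAux G n) v}

/-- `stage G k` is the vertex set of `G^(k)` (for `k ≥ 1`), so `stage G 1 = V(G)`. -/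
def stage (G : SimpleGraph V) (k : ℕ) : Set V := stageAux G (k - 1)

/-- The corner rank of a vertex: the least `k ≥ 1` such that `v` is a strict corner
of `G^(k)`, or `G^(k)` is a clique still containing `v`; and `⊤` (that is, `∞`) if
there is no such `k`. -/
noncomputable def cornerRank (G : SimpleGraph V) (v : V) : ℕ∞ :=
  sInf {k : ℕ∞ | ∃ n : ℕ, k = (n : ℕ∞) ∧ 1 ≤ n ∧
    (StrictCorner G (stage G n) v ∨ (G.IsClique (stage G n) ∧ v ∈ stage G n))}

/-- The corner rank of a graph: the largest corner rank of a vertex. -/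
noncomputable def graphRank (G : SimpleGraph V) : ℕ∞ := ⨆ v, cornerRank G v

/-- A graph is cop-win iff every vertex has finite corner rank. -/
def CopWin (G : SimpleGraph V) : Prop := ∀ v, cornerRank G v ≠ ⊤

/-- `v` dominates the set `S`: `v` is (reflexively) adjacent to every vertex of `S`. -/
def Dominates (G : SimpleGraph V) (v : V) (S : Set V) : Prop :=
  ∀ u ∈ S, u = v ∨ G.Adj v u

/-- A cop-win graph of corner rank `α ≥ 2` is `tp1` if some vertex of corner rank `α`
dominates the vertex set of `G^(α-1)`. -/
def Tp1 (G : SimpleGraph V) : Prop :=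
  ∃ α : ℕ, 2 ≤ α ∧ graphRank G = (α : ℕ∞) ∧
    ∃ v, cornerRank G v = (α : ℕ∞) ∧ Dominates G v (stage G (α - 1))

/-- `G` realizes the vector `(x_α, …, x_1)` (written as the list `[x_α, …, x_1]`):
`G` is cop-win of corner rank `α` and for each `k`, `x_k` is the number of vertices
of corner rank `k`. -/
def Realizes (G : SimpleGraph V) (x : List ℕ) : Prop :=
  CopWin G ∧ graphRank G = (x.length : ℕ∞) ∧
  ∀ i : Fin x.length,
    x.get i = {v | cornerRank G v = ((x.length - (i : ℕ) : ℕ) : ℕ∞)}.ncard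

/-- `G` r-realizes `x` (for `r ∈ {0,1}`): `G` realizes `x` and `G` is tp-r. -/
def RRealizes (G : SimpleGraph V) (r : ℕ) (x : List ℕ) : Prop :=
  Realizes G x ∧ (Tp1 G ↔ r = 1)

/-- A vector is realizable if it is the rank cardinality vector of some finite cop-win graph. -/
def Realizable (x : List ℕ) : Prop :=
  ∃ (W : Type) (_ : Fintype W) (G : SimpleGraph W), Realizes G x

/-- A vector is r-realizable if some finite tp-r cop-win graph realizes it. -/
def RRealizable (r : ℕ) (x : List ℕ) : Prop :=
  ∃ (W : Type) (_ : Fintype W) (G : SimpleGraph W), RRealizes G r x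

open Classical in
/-- The capture time of a cop-win graph: `cr(G) - r(G)`. -/
noncomputable def captureTime (G : SimpleGraph V) : ℕ :=
  (graphRank G).toNat - (if Tp1 G then 1 else 0)

section CopsRobbersAux
variable {V : Type*}
variable {G : SimpleGraph V}

/-- The rank condition at stage `n`. -/
def Cond (G : SimpleGraph V) (v : V) (n : ℕ) : Prop :=
  StrictCorner G (stage G n) v ∨ (G.IsClique (stage G n) ∧ v ∈ stage G n)

lemma cornerRank_eq_sInf (v : V) :
    cornerRank G v = sInf {k : ℕ∞ | ∃ n : ℕ, k = (n : ℕ∞) ∧ 1 ≤ n ∧ Cond G v n} := rfl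

lemma corner_mem {S : Set V} {v : V} (h : StrictCorner G S v) : v ∈ S := h.1

lemma stageAux_succ (n : ℕ) :
    stageAux G (n + 1) = stageAux G n \ {v | StrictCorner G (stageAux G n) v} := rfl

lemma stageAux_antitone : Antitone (stageAux G) := by
  refine antitone_nat_of_succ_le fun n => ?_
  rw [stageAux_succ]; exact Set.diff_subset

lemma stage_one : stage G 1 = Set.univ := rfl

lemma stage_succ (k : ℕ) (hk : 1 ≤ k) :
    stage G (k + 1) = stage G k \ {v | StrictCorner G (stage G k) v} := by
  unfold stage
  have : k + 1 - 1 = (k - 1) + 1 := by omega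
  rw [this, stageAux_succ]

lemma not_mem_stageAux_iff (v : V) (n : ℕ) :
    v ∉ stageAux G n ↔ ∃ j < n, StrictCorner G (stageAux G j) v := by
  induction n with
  | zero => simp [stageAux]
  | succ n ih =>
    rw [stageAux_succ]
    constructor
    · intro h
      rw [Set.mem_diff] at h
      push_neg at h
      by_cases hv : v ∈ stageAux G n
      · exact ⟨n, Nat.lt_succ_self n, h hv⟩
      · obtain ⟨j, hj, hc⟩ := ih.mp hv
        exact ⟨j, hj.trans (Nat.lt_succ_self n), hc⟩
    · rintro ⟨j, hj, hc⟩ hmem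
      rcases Nat.lt_succ_iff_lt_or_eq.mp hj with hj' | rfl
      · exact ih.mpr ⟨j, hj', hc⟩ hmem.1
      · exact hmem.2 hc

/-- a clique has no strict corners -/
lemma no_corner_of_clique {S : Set V} (h : G.IsClique S) (v : V) :
    ¬ StrictCorner G S v := by
  rintro ⟨hv, w, hw, hne, hss⟩
  have hNv : closedNbhd G S v = S := by
    ext u
    refine ⟨fun hu => hu.1, fun hu => ⟨hu, ?_⟩⟩
    by_cases huv : u = v
    · exact Or.inl huv
    · exact Or.inr (h hu hv huv)
  have hNw : closedNbhd G S w ⊆ S := fun u hu => hu.1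
  exact absurd (hss.trans_subset hNw) (by rw [hNv]; exact fun h => h.false)

lemma stageAux_stable_of_no_corner {n : ℕ}
    (h : ∀ v, ¬ StrictCorner G (stageAux G n) v) {j : ℕ} (hj : n ≤ j) :
    stageAux G j = stageAux G n := by
  induction j with
  | zero =>
    have : n = 0 := by omega
    rw [this]
  | succ j ih =>
    rcases Nat.lt_or_ge n (j+1) with hl | hg
    · have hnj : n ≤ j := by omega
      rw [stageAux_succ, ih hnj]
      ext u; simp only [Set.mem_diff, Set.mem_setOf_eq]
      exact ⟨fun hu => hu.1, fun hu => ⟨hu, h u⟩⟩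
    · have : n = j + 1 := by omega
      rw [this]
  

lemma cornerRank_le {v : V} {n : ℕ} (hn : 1 ≤ n) (h : Cond G v n) :
    cornerRank G v ≤ n := sInf_le ⟨n, rfl, hn, h⟩

lemma cornerRank_spec {v : V} (h : cornerRank G v ≠ ⊤) :
    ∃ n : ℕ, cornerRank G v = (n : ℕ∞) ∧ 1 ≤ n ∧ Cond G v n := by
  have hne : {k : ℕ∞ | ∃ n : ℕ, k = (n : ℕ∞) ∧ 1 ≤ n ∧ Cond G v n}.Nonempty := by
    by_contra hempty
    rw [Set.not_nonempty_iff_eq_empty] at hempty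
    exact h (by rw [cornerRank_eq_sInf, hempty, sInf_empty])
  have := csInf_mem hne
  rw [← cornerRank_eq_sInf] at this
  obtain ⟨n, hn, h1, hc⟩ := this
  exact ⟨n, hn, h1, hc⟩

lemma cornerRank_ne_top {v : V} {n : ℕ} (hn : 1 ≤ n) (h : Cond G v n) :
    cornerRank G v ≠ ⊤ :=
  fun ht => by simpa [ht] using cornerRank_le hn h

lemma stage_eq_stageAux (k : ℕ) : stage G k = stageAux G (k - 1) := rfl

lemma not_mem_stageAux_of_corner {v : V} {k : ℕ} (hk : 1 ≤ k)
    (h : StrictCorner G (stage G k) v) : v ∉ stageAux G k := by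
  have h1 : stageAux G k = stageAux G (k-1) \ {u | StrictCorner G (stageAux G (k-1)) u} := by
    conv_lhs => rw [show k = (k - 1) + 1 by omega, stageAux_succ]
  rw [h1]
  intro hmem
  exact hmem.2 h

lemma stageAux_stable_of_clique {k : ℕ} (hk : 1 ≤ k) (h : G.IsClique (stage G k))
    {j : ℕ} (hj : k - 1 ≤ j) : stageAux G j = stage G k :=
  stageAux_stable_of_no_corner (no_corner_of_clique h) hj

lemma rank_eq_of_corner {v : V} {k : ℕ} (hk : 1 ≤ k)
    (h : StrictCorner G (stage G k) v) : cornerRank G v = k := by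
  have hle : cornerRank G v ≤ k := cornerRank_le hk (Or.inl h)
  obtain ⟨j, hj, hj1, hc⟩ := cornerRank_spec (cornerRank_ne_top hk (Or.inl h))
  have hjk : j ≤ k := by
    rw [hj] at hle; exact_mod_cast hle
  rcases Nat.lt_or_ge j k with hlt | hge
  · exfalso
    rcases hc with hcor | ⟨hclq, hmem⟩
    · have h1 : v ∉ stageAux G j := not_mem_stageAux_of_corner hj1 hcor
      have h2 : v ∈ stageAux G (k-1) := h.1
      exact h1 (stageAux_antitone (by omega) h2)
    · have hstable : stageAux G (k-1) = stage G j :=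
        stageAux_stable_of_clique hj1 hclq (by omega)
      have : StrictCorner G (stage G j) v := by
        rw [stage_eq_stageAux k, hstable] at h; exact h
      exact no_corner_of_clique hclq v this
  · rw [hj]; congr 1; omega

lemma graphRank_le_of_clique {k : ℕ} (hk : 1 ≤ k) (h : G.IsClique (stage G k)) :
    graphRank G ≤ k := by
  refine iSup_le fun v => ?_
  by_cases hv : v ∈ stage G k
  · exact cornerRank_le hk (Or.inr ⟨h, hv⟩)
  · rw [stage_eq_stageAux] at hv
    obtain ⟨j, hj, hcor⟩ := (not_mem_stageAux_iff v (k-1)).mp hv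
    have : StrictCorner G (stage G (j+1)) v := by
      rw [stage_eq_stageAux]; simpa using hcor
    calc cornerRank G v ≤ ((j+1 : ℕ) : ℕ∞) := cornerRank_le (by omega) (Or.inl this)
    _ ≤ (k : ℕ∞) := by exact_mod_cast by omega

lemma corner_of_rank_eq {v : V} {k : ℕ} (hk : 1 ≤ k)
    (hcw : cornerRank G v = (k : ℕ∞)) (hlt : (k : ℕ∞) < graphRank G) :
    StrictCorner G (stage G k) v := by
  obtain ⟨j, hj, hj1, hc⟩ := cornerRank_spec (by rw [hcw]; exact ENat.coe_ne_top k)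
  have hjk : j = k := by rw [hcw] at hj; exact_mod_cast hj.symm
  subst hjk
  rcases hc with hcor | ⟨hclq, _⟩
  · exact hcor
  · exact absurd (graphRank_le_of_clique hj1 hclq) (not_le.mpr hlt)

lemma corners_stage_eq {k : ℕ} (hk : 1 ≤ k) (hlt : (k : ℕ∞) < graphRank G) :
    {v | StrictCorner G (stage G k) v} = {v | cornerRank G v = (k : ℕ∞)} := by
  ext v
  exact ⟨fun h => rank_eq_of_corner hk h, fun h => corner_of_rank_eq hk h hlt⟩

lemma stage_graphRank_eq {α : ℕ} (hα : 1 ≤ α) (hr : graphRank G = (α : ℕ∞))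
    (hcw : CopWin G) :
    stage G α = {v | cornerRank G v = (α : ℕ∞)} := by
  ext v
  constructor
  · intro hv
    obtain ⟨j, hj, hj1, hc⟩ := cornerRank_spec (hcw v)
    have hle : cornerRank G v ≤ graphRank G := le_iSup _ v
    rw [hj, hr] at hle
    have hjα : j ≤ α := by exact_mod_cast hle
    have hjeq : j = α := by
      rcases hc with hcor | ⟨hclq, _⟩
      · by_contra hne
        have h1 : v ∉ stageAux G j := not_mem_stageAux_of_corner hj1 hcor
        exact h1 (stageAux_antitone (by omega) hv)
      · have := graphRank_le_of_clique hj1 hclq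
        rw [hr] at this
        have : α ≤ j := by exact_mod_cast this
        omega
    show cornerRank G v = _
    rw [hj, hjeq]
  · intro hv
    rw [stage_eq_stageAux]
    by_contra hmem
    obtain ⟨j, hj, hcor⟩ := (not_mem_stageAux_iff v (α-1)).mp hmem
    have : StrictCorner G (stage G (j+1)) v := by
      rw [stage_eq_stageAux]; simpa using hcor
    have h1 : cornerRank G v = ((j+1 : ℕ) : ℕ∞) := rank_eq_of_corner (by omega) this
    rw [Set.mem_setOf_eq] at hv
    rw [hv] at h1
    have : α = j + 1 := by exact_mod_cast h1
    omega


/-- `f 0, …, f (m-1)` is an induced path on the set `S`. -/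
def IsPathOn (G : SimpleGraph V) (S : Set V) (m : ℕ) (f : ℕ → V) : Prop :=
  (∀ i < m, ∀ j < m, f i = f j → i = j) ∧
  S = f '' (Set.Iio m) ∧
  (∀ i < m, ∀ j < m, (G.Adj (f i) (f j) ↔ i + 1 = j ∨ j + 1 = i))

lemma IsPathOn.reverse {S : Set V} {m : ℕ} {f : ℕ → V} (h : IsPathOn G S m f) :
    IsPathOn G S m (fun i => f (m - 1 - i)) := by
  obtain ⟨hinj, himg, hadj⟩ := h
  refine ⟨fun i hi j hj hij => ?_, ?_, fun i hi j hj => ?_⟩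
  · have := hinj _ (by omega) _ (by omega) hij
    omega
  · rw [himg]
    ext u
    simp only [Set.mem_image, Set.mem_Iio]
    constructor
    · rintro ⟨t, ht, rfl⟩
      exact ⟨m - 1 - t, by omega, by congr 1; omega⟩
    · rintro ⟨t, ht, rfl⟩
      exact ⟨m - 1 - t, by omega, rfl⟩
  · rw [hadj _ (by omega) _ (by omega)]
    omega

lemma IsPathOn.mem_iff {S : Set V} {m : ℕ} {f : ℕ → V} (h : IsPathOn G S m f) {u : V} :
    u ∈ S ↔ ∃ t < m, u = f t := by
  rw [h.2.1]
  simp only [Set.mem_image, Set.mem_Iio]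
  exact ⟨fun ⟨t, ht, hu⟩ => ⟨t, ht, hu.symm⟩, fun ⟨t, ht, hu⟩ => ⟨t, ht, hu.symm⟩⟩

section PathStage

variable {n : ℕ} {f : ℕ → V}

lemma mem_closedNbhd_image_Icc (hf : IsPathOn G Set.univ n f) {p q i : ℕ}
    (hpi : p ≤ i) (hiq : i ≤ q) (hq : q < n) (u : V) :
    u ∈ closedNbhd G (f '' Set.Icc p q) (f i) ↔
      ∃ t, (p ≤ t ∧ t ≤ q) ∧ u = f t ∧ (t = i ∨ t + 1 = i ∨ i + 1 = t) := by
  obtain ⟨hinj, himg, hadj⟩ := hf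
  constructor
  · rintro ⟨⟨t, ht, rfl⟩, hrel⟩
    simp only [Set.mem_Icc] at ht
    refine ⟨t, ht, rfl, ?_⟩
    rcases hrel with heq | hadj'
    · exact Or.inl (hinj _ (by omega) _ (by omega) heq)
    · rcases (hadj _ (by omega) _ (by omega)).mp hadj' with h' | h'
      · exact Or.inr (Or.inl h')
      · exact Or.inr (Or.inr h')
  · rintro ⟨t, ht, rfl, hrel⟩
    refine ⟨⟨t, by simp [Set.mem_Icc]; omega, rfl⟩, ?_⟩
    rcases hrel with rfl | h' | h'
    · exact Or.inl rfl
    · exact Or.inr ((hadj _ (by omega) _ (by omega)).mpr (Or.inl h'))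
    · exact Or.inr ((hadj _ (by omega) _ (by omega)).mpr (Or.inr h'))

lemma corner_left_endpoint (hf : IsPathOn G Set.univ n f) {p q : ℕ}
    (hpq : p + 2 ≤ q) (hq : q < n) :
    StrictCorner G (f '' Set.Icc p q) (f p) := by
  refine ⟨⟨p, by simp [Set.mem_Icc]; omega, rfl⟩, f (p+1),
    ⟨p+1, by simp [Set.mem_Icc]; omega, rfl⟩, ?_, ?_⟩
  · intro heq
    have := hf.1 _ (by omega) _ (by omega) heq
    omega
  · constructor
    · intro u hu
      rw [mem_closedNbhd_image_Icc hf (le_refl p) (by omega) hq] at hu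
      rw [mem_closedNbhd_image_Icc hf (by omega) (by omega) hq]
      obtain ⟨t, ht, rfl, hrel⟩ := hu
      exact ⟨t, ht, rfl, by omega⟩
    · intro hsub
      have h1 : f (p+2) ∈ closedNbhd G (f '' Set.Icc p q) (f (p+1)) := by
        rw [mem_closedNbhd_image_Icc hf (by omega) (by omega) hq]
        exact ⟨p+2, by omega, rfl, by omega⟩
      have h2 := hsub h1
      rw [mem_closedNbhd_image_Icc hf (le_refl p) (by omega) hq] at h2
      obtain ⟨t, ht, heq, hrel⟩ := h2
      have := hf.1 _ (by omega) _ (by omega) heq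
      omega

lemma not_corner_interior (hf : IsPathOn G Set.univ n f) {p q i : ℕ}
    (hpi : p < i) (hiq : i < q) (hq : q < n) :
    ¬ StrictCorner G (f '' Set.Icc p q) (f i) := by
  rintro ⟨hmem, w, ⟨s, hs, rfl⟩, hne, hsub, -⟩
  simp only [Set.mem_Icc] at hs
  have hsi : s ≠ i := fun h => hne (by rw [h])
  have key : ∀ t, p ≤ t → t ≤ q → (t = i ∨ t + 1 = i ∨ i + 1 = t) →
      (t = s ∨ t + 1 = s ∨ s + 1 = t) := by
    intro t htp htq hrel
    have h1 : f t ∈ closedNbhd G (f '' Set.Icc p q) (f i) := by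
      rw [mem_closedNbhd_image_Icc hf (by omega) (by omega) hq]
      exact ⟨t, ⟨htp, htq⟩, rfl, hrel⟩
    have h2 := hsub h1
    rw [mem_closedNbhd_image_Icc hf (by omega) (by omega) hq] at h2
    obtain ⟨t', ht', heq, hrel'⟩ := h2
    have : t = t' := hf.1 _ (by omega) _ (by omega) heq
    omega
  have k1 := key (i-1) (by omega) (by omega) (by omega)
  have k2 := key (i+1) (by omega) (by omega) (by omega)
  omega

lemma corners_image_Icc (hf : IsPathOn G Set.univ n f) {p q : ℕ}
    (hpq : p + 2 ≤ q) (hq : q < n) :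
    {v | StrictCorner G (f '' Set.Icc p q) v} = {f p, f q} := by
  ext v
  simp only [Set.mem_setOf_eq, Set.mem_insert_iff, Set.mem_singleton_iff]
  constructor
  · intro hv
    obtain ⟨i, hi, rfl⟩ := hv.1
    simp only [Set.mem_Icc] at hi
    rcases Nat.lt_or_ge p i with h1 | h1
    · rcases Nat.lt_or_ge i q with h2 | h2
      · exact absurd hv (not_corner_interior hf h1 h2 hq)
      · right; congr 1; omega
    · left; congr 1; omega
  · rintro (rfl | rfl)
    · exact corner_left_endpoint hf hpq hq
    · have hrev := corner_left_endpoint hf.reverse (p := n-1-q) (q := n-1-p) (by omega) (by omega)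
      have himg : (fun i => f (n - 1 - i)) '' Set.Icc (n-1-q) (n-1-p) = f '' Set.Icc p q := by
        ext u
        simp only [Set.mem_image, Set.mem_Icc]
        constructor
        · rintro ⟨t, ht, rfl⟩
          exact ⟨n-1-t, by omega, rfl⟩
        · rintro ⟨t, ht, rfl⟩
          exact ⟨n-1-t, by omega, by congr 1; omega⟩
      rw [himg] at hrev
      have : f q = (fun i => f (n-1-i)) (n-1-q) := by simp only []; congr 1; omega
      rw [this]
      exact hrev

lemma corners_singleton (z : V) : {v | StrictCorner G {z} v} = ∅ := by
  ext v
  simp only [Set.mem_setOf_eq, Set.mem_empty_iff_false, iff_false]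
  rintro ⟨hv, w, hw, hne, -⟩
  rw [Set.mem_singleton_iff] at hv hw
  exact hne (hw.trans hv.symm)


variable {α : ℕ}

lemma stageAux_path_low (hf : IsPathOn G Set.univ n f) (hn : n = 2*α - 1) (hα : 2 ≤ α) :
    ∀ j ≤ α - 1, stageAux G j = f '' Set.Icc j (n - 1 - j) := by
  intro j
  induction j with
  | zero =>
    intro _
    show Set.univ = _
    rw [hf.2.1]
    ext u
    simp only [Set.mem_image, Set.mem_Iio, Set.mem_Icc]
    constructor
    · rintro ⟨t, ht, rfl⟩; exact ⟨t, by omega, rfl⟩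
    · rintro ⟨t, ht, rfl⟩; exact ⟨t, by omega, rfl⟩
  | succ j ih =>
    intro hj
    rw [stageAux_succ, ih (by omega), corners_image_Icc hf (by omega) (by omega)]
    ext u
    simp only [Set.mem_diff, Set.mem_image, Set.mem_Icc, Set.mem_insert_iff,
      Set.mem_singleton_iff]
    constructor
    · rintro ⟨⟨t, ht, rfl⟩, hne⟩
      refine ⟨t, ⟨?_, ?_⟩, rfl⟩
      · rcases Nat.lt_or_ge j t with h | h
        · omega
        · exact absurd (Or.inl (by congr 1; omega)) hne
      · rcases Nat.lt_or_ge t (n - 1 - j) with h | h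
        · omega
        · exact absurd (Or.inr (by congr 1; omega)) hne
    · rintro ⟨t, ht, rfl⟩
      refine ⟨⟨t, by omega, rfl⟩, ?_⟩
      rintro (heq | heq) <;>
        [have := hf.1 _ (by omega) _ (by omega) heq;
         have := hf.1 _ (by omega) _ (by omega) heq] <;> omega

lemma stageAux_path_high (hf : IsPathOn G Set.univ n f) (hn : n = 2*α - 1) (hα : 2 ≤ α) :
    ∀ j, α - 1 ≤ j → stageAux G j = {f (α - 1)} := by
  have hbase : stageAux G (α - 1) = {f (α - 1)} := by
    rw [stageAux_path_low hf hn hα (α - 1) le_rfl]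
    have : n - 1 - (α - 1) = α - 1 := by omega
    rw [this]
    ext u
    simp only [Set.mem_image, Set.mem_Icc, Set.mem_singleton_iff]
    constructor
    · rintro ⟨t, ht, rfl⟩
      have : t = α - 1 := by omega
      rw [this]
    · rintro rfl
      exact ⟨α - 1, by omega, rfl⟩
  intro j hj
  have := stageAux_stable_of_no_corner (G := G) (n := α - 1)
    (by rw [hbase]; intro v hv; rw [← Set.mem_empty_iff_false v, ← corners_singleton (f (α-1))]; exact hv) hj
  rw [this, hbase]

lemma stage_path (hf : IsPathOn G Set.univ n f) (hn : n = 2*α - 1) (hα : 2 ≤ α)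
    {k : ℕ} (hk : 1 ≤ k) (hkα : k ≤ α) :
    stage G k = f '' Set.Icc (k - 1) (n - k) := by
  rcases Nat.lt_or_ge (k - 1) (α - 1) with h | h
  · rw [stage_eq_stageAux, stageAux_path_low hf hn hα (k - 1) (by omega)]
    congr 1
    have : n - 1 - (k - 1) = n - k := by omega
    rw [this]
  · have hkeq : k = α := by omega
    rw [stage_eq_stageAux, stageAux_path_high hf hn hα (k - 1) (by omega), hkeq]
    ext u
    simp only [Set.mem_singleton_iff, Set.mem_image, Set.mem_Icc]
    constructor
    · rintro rfl; exact ⟨α - 1, by omega, rfl⟩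
    · rintro ⟨t, ht, rfl⟩
      have : t = α - 1 := by omega
      rw [this]

lemma path_not_clique_stage (hf : IsPathOn G Set.univ n f) (hn : n = 2*α - 1) (hα : 2 ≤ α)
    {k : ℕ} (hk : 1 ≤ k) (hkα : k ≤ α - 1) :
    ¬ G.IsClique (stage G k) := by
  rw [stage_path hf hn hα hk (by omega)]
  intro hclq
  have h1 : f (k - 1) ∈ f '' Set.Icc (k-1) (n-k) := ⟨k-1, by simp [Set.mem_Icc]; omega, rfl⟩
  have h2 : f (k + 1) ∈ f '' Set.Icc (k-1) (n-k) := ⟨k+1, by simp [Set.mem_Icc]; omega, rfl⟩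
  have hne : f (k - 1) ≠ f (k + 1) := by
    intro heq
    have := hf.1 _ (by omega) _ (by omega) heq
    omega
  have := hclq h1 h2 hne
  rw [hf.2.2 _ (by omega) _ (by omega)] at this
  omega

lemma path_rank_low (hf : IsPathOn G Set.univ n f) (hn : n = 2*α - 1) (hα : 2 ≤ α)
    {i : ℕ} (hi : i ≤ α - 1) :
    cornerRank G (f i) = ((i + 1 : ℕ) : ℕ∞) := by
  rcases Nat.lt_or_ge i (α - 1) with hlow | hhigh
  · -- f i is a strict corner of stage (i+1)
    refine rank_eq_of_corner (by omega) ?_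
    rw [stage_path hf hn hα (by omega) (by omega)]
    have : i + 1 - 1 = i := by omega
    rw [this]
    exact corner_left_endpoint hf (by omega) (by omega)
  · -- i = α - 1 : clique case
    have hieq : i = α - 1 := by omega
    subst hieq
    have hclq : G.IsClique (stage G α) ∧ f (α - 1) ∈ stage G α := by
      rw [stage_eq_stageAux, stageAux_path_high hf hn hα (α - 1) le_rfl]
      exact ⟨SimpleGraph.IsClique.of_subsingleton Set.subsingleton_singleton, rfl⟩
    have hle : cornerRank G (f (α - 1)) ≤ (α : ℕ∞) :=
      cornerRank_le (by omega) (Or.inr hclq)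
    obtain ⟨j, hj, hj1, hc⟩ := cornerRank_spec (cornerRank_ne_top (by omega) (Or.inr hclq))
    have hjα : j ≤ α := by rw [hj] at hle; exact_mod_cast hle
    have hjeq : j = α := by
      by_contra hne
      have hjlt : j ≤ α - 1 := by omega
      rcases hc with hcor | ⟨hclq', -⟩
      · rw [stage_path hf hn hα hj1 (by omega)] at hcor
        exact not_corner_interior hf (p := j - 1) (q := n - j) (by omega) (by omega) (by omega) hcor
      · exact path_not_clique_stage hf hn hα hj1 hjlt hclq'
    rw [hj, hjeq]
    congr 1
    omega

lemma path_rank (hf : IsPathOn G Set.univ n f) (hn : n = 2*α - 1) (hα : 2 ≤ α)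
    {i : ℕ} (hi : i < n) :
    cornerRank G (f i) = ((min i (n - 1 - i) + 1 : ℕ) : ℕ∞) := by
  rcases Nat.lt_or_ge i α with hlow | hhigh
  · have : min i (n - 1 - i) = i := by omega
    rw [this]
    exact path_rank_low hf hn hα (by omega)
  · have : min i (n - 1 - i) = n - 1 - i := by omega
    rw [this]
    have := path_rank_low (f := fun t => f (n - 1 - t)) hf.reverse hn hα
      (i := n - 1 - i) (by omega)
    have heq : n - 1 - (n - 1 - i) = i := by omega
    rw [heq] at this
    exact this

end PathStage



section PathRealizes

variable {n α : ℕ} {f : ℕ → V}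

lemma path_copwin (hf : IsPathOn G Set.univ n f) (hn : n = 2*α - 1) (hα : 2 ≤ α) :
    CopWin G := by
  intro v
  obtain ⟨i, hi, rfl⟩ := hf.mem_iff.mp (Set.mem_univ v)
  rw [path_rank hf hn hα hi]
  exact ENat.coe_ne_top _

lemma path_graphRank (hf : IsPathOn G Set.univ n f) (hn : n = 2*α - 1) (hα : 2 ≤ α) :
    graphRank G = (α : ℕ∞) := by
  apply le_antisymm
  · refine iSup_le fun v => ?_
    obtain ⟨i, hi, rfl⟩ := hf.mem_iff.mp (Set.mem_univ v)
    rw [path_rank hf hn hα hi]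
    exact_mod_cast (by omega : min i (n - 1 - i) + 1 ≤ α)
  · have h1 : cornerRank G (f (α - 1)) = ((α - 1 + 1 : ℕ) : ℕ∞) :=
      path_rank_low hf hn hα le_rfl
    have h2 : (α - 1 + 1 : ℕ) = α := by omega
    rw [h2] at h1
    rw [← h1]
    exact le_iSup _ _

lemma path_rank_set_top (hf : IsPathOn G Set.univ n f) (hn : n = 2*α - 1) (hα : 2 ≤ α) :
    {v | cornerRank G v = (α : ℕ∞)} = {f (α - 1)} := by
  ext v
  simp only [Set.mem_setOf_eq, Set.mem_singleton_iff]
  constructor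
  · intro hv
    obtain ⟨i, hi, rfl⟩ := hf.mem_iff.mp (Set.mem_univ v)
    rw [path_rank hf hn hα hi] at hv
    have : min i (n - 1 - i) + 1 = α := by exact_mod_cast hv
    congr 1
    omega
  · rintro rfl
    have h1 : cornerRank G (f (α - 1)) = ((α - 1 + 1 : ℕ) : ℕ∞) :=
      path_rank_low hf hn hα le_rfl
    rw [h1]
    congr 1
    omega

lemma path_rank_set (hf : IsPathOn G Set.univ n f) (hn : n = 2*α - 1) (hα : 2 ≤ α)
    {k : ℕ} (hk : 1 ≤ k) (hkα : k ≤ α - 1) :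
    {v | cornerRank G v = (k : ℕ∞)} = {f (k - 1), f (n - k)} := by
  ext v
  simp only [Set.mem_setOf_eq, Set.mem_insert_iff, Set.mem_singleton_iff]
  constructor
  · intro hv
    obtain ⟨i, hi, rfl⟩ := hf.mem_iff.mp (Set.mem_univ v)
    rw [path_rank hf hn hα hi] at hv
    have hmin : min i (n - 1 - i) + 1 = k := by exact_mod_cast hv
    rcases (by omega : i = k - 1 ∨ i = n - k) with rfl | rfl
    · exact Or.inl rfl
    · exact Or.inr rfl
  · rintro (rfl | rfl)
    · rw [path_rank hf hn hα (by omega)]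
      congr 1
      omega
    · rw [path_rank hf hn hα (by omega)]
      congr 1
      omega

lemma path_realizes (hf : IsPathOn G Set.univ n f) (hn : n = 2*α - 1) (hα : 2 ≤ α) :
    Realizes G (1 :: List.replicate (α - 1) 2) := by
  have hlen : (1 :: List.replicate (α - 1) 2).length = α := by
    simp [List.length_replicate]; omega
  refine ⟨path_copwin hf hn hα, by rw [hlen]; exact path_graphRank hf hn hα, ?_⟩
  intro i
  rcases i with ⟨iv, hiv⟩
  rw [hlen] at hiv
  have hlen' : (1 :: List.replicate (α - 1) 2).length = α := hlen
  rcases iv with _ | j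
  · -- top rank
    have : ((1 :: List.replicate (α - 1) 2).length - 0 : ℕ) = α := by rw [hlen']; omega
    simp only [this, List.get]
    rw [path_rank_set_top hf hn hα, Set.ncard_singleton]
  · -- rank α - (j+1)
    have hk1 : 1 ≤ α - (j + 1) := by omega
    have hk2 : α - (j + 1) ≤ α - 1 := by omega
    have hval : ((1 :: List.replicate (α - 1) 2).length - (j + 1) : ℕ) = α - (j + 1) := by
      rw [hlen']
    simp only [hval]
    have hget : (1 :: List.replicate (α - 1) 2).get ⟨j + 1, by rw [hlen']; omega⟩ = 2 := by
      simp [List.get_eq_getElem, List.getElem_replicate]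
    rw [hget, path_rank_set hf hn hα hk1 hk2]
    rw [Set.ncard_pair]
    intro heq
    have := hf.1 _ (by omega) _ (by omega) heq
    omega

end PathRealizes


section Step

variable {S : Set V} {a b : V} {m : ℕ} {f : ℕ → V}

lemma pathT_mem (hpath : IsPathOn G (S \ {a, b}) m f) {t : ℕ} (ht : t < m) :
    f t ∈ S ∧ f t ≠ a ∧ f t ≠ b := by
  have h : f t ∈ S \ {a, b} := hpath.mem_iff.mpr ⟨t, ht, rfl⟩
  simp only [Set.mem_diff, Set.mem_insert_iff, Set.mem_singleton_iff] at h
  exact ⟨h.1, fun h' => h.2 (Or.inl h'), fun h' => h.2 (Or.inr h')⟩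

lemma mem_S_cases (hpath : IsPathOn G (S \ {a, b}) m f) {u : V} (hu : u ∈ S) :
    u = a ∨ u = b ∨ ∃ t < m, u = f t := by
  by_cases h1 : u = a
  · exact Or.inl h1
  by_cases h2 : u = b
  · exact Or.inr (Or.inl h2)
  have : u ∈ S \ {a, b} := by
    simp only [Set.mem_diff, Set.mem_insert_iff, Set.mem_singleton_iff]
    exact ⟨hu, fun h => h.elim h1 h2⟩
  exact Or.inr (Or.inr (hpath.mem_iff.mp this))

lemma corner_a (hcor : {v | StrictCorner G S v} = {a, b}) :
    StrictCorner G S a := by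
  have : a ∈ {v | StrictCorner G S v} := by rw [hcor]; exact Or.inl rfl
  exact this

lemma corner_b (hcor : {v | StrictCorner G S v} = {a, b}) :
    StrictCorner G S b := by
  have : b ∈ {v | StrictCorner G S v} := by rw [hcor]; exact Or.inr rfl
  exact this

lemma not_corner_f (hcor : {v | StrictCorner G S v} = {a, b})
    (hpath : IsPathOn G (S \ {a, b}) m f) {t : ℕ} (ht : t < m) :
    ¬ StrictCorner G S (f t) := by
  intro h
  have : f t ∈ {v | StrictCorner G S v} := h
  rw [hcor] at this
  obtain ⟨-, h1, h2⟩ := pathT_mem hpath ht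
  rcases this with h' | h'
  · exact h1 h'
  · exact h2 h'

/-- Build the path on `S` once the attachment structure is known. -/
lemma build_path (hab : a ≠ b)
    (hpath : IsPathOn G (S \ {a, b}) m f) (ha : a ∈ S) (hb : b ∈ S) (hm : 1 ≤ m)
    (h1 : G.Adj a (f 0)) (hB : G.Adj b (f (m - 1)))
    (hab' : ¬ G.Adj a b)
    (hAonly : ∀ t < m, G.Adj a (f t) → t = 0)
    (hBonly : ∀ t < m, G.Adj b (f t) → t = m - 1) :
    IsPathOn G S (m + 2) (fun i => if i = 0 then a else if i ≤ m then f (i - 1) else b) := by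
  obtain ⟨hinj, himg, hadj⟩ := hpath
  have hfa : ∀ t < m, f t ≠ a := fun t ht => (pathT_mem ⟨hinj, himg, hadj⟩ ht).2.1
  have hfb : ∀ t < m, f t ≠ b := fun t ht => (pathT_mem ⟨hinj, himg, hadj⟩ ht).2.2
  have hfS : ∀ t < m, f t ∈ S := fun t ht => (pathT_mem ⟨hinj, himg, hadj⟩ ht).1
  have key : ∀ i ≤ m + 1,
      (fun i => if i = 0 then a else if i ≤ m then f (i - 1) else b) i =
        (if i = 0 then a else if i ≤ m then f (i - 1) else b) := fun i _ => rfl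
  refine ⟨?_, ?_, ?_⟩
  · -- injectivity
    intro i hi j hj hij
    simp only [] at hij
    have ci : i = 0 ∨ (1 ≤ i ∧ i ≤ m) ∨ i = m + 1 := by omega
    have cj : j = 0 ∨ (1 ≤ j ∧ j ≤ m) ∨ j = m + 1 := by omega
    rcases ci with rfl | ⟨hi1, hi2⟩ | rfl <;> rcases cj with rfl | ⟨hj1, hj2⟩ | rfl
    · rfl
    · rw [if_pos rfl, if_neg (by omega), if_pos (by omega)] at hij
      exact absurd hij.symm (hfa _ (by omega))
    · rw [if_pos rfl, if_neg (by omega), if_neg (by omega)] at hij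
      exact absurd hij hab
    · rw [if_pos rfl, if_neg (by omega), if_pos (by omega)] at hij
      exact absurd hij (hfa _ (by omega))
    · rw [if_neg (by omega), if_pos (by omega), if_neg (by omega), if_pos (by omega)] at hij
      have := hinj _ (by omega) _ (by omega) hij
      omega
    · rw [if_neg (by omega), if_pos (by omega), if_neg (by omega), if_neg (by omega)] at hij
      exact absurd hij (hfb _ (by omega))
    · rw [if_neg (by omega), if_neg (by omega), if_pos rfl] at hij
      exact absurd hij.symm hab
    · rw [if_neg (by omega), if_neg (by omega), if_neg (by omega), if_pos (by omega)] at hij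
      exact absurd hij.symm (hfb _ (by omega))
    · rfl
  · -- image
    ext u
    simp only [Set.mem_image, Set.mem_Iio]
    constructor
    · intro hu
      rcases mem_S_cases ⟨hinj, himg, hadj⟩ hu with rfl | rfl | ⟨t, ht, rfl⟩
      · exact ⟨0, by omega, by simp⟩
      · refine ⟨m + 1, by omega, ?_⟩
        rw [if_neg (by omega), if_neg (by omega)]
      · refine ⟨t + 1, by omega, ?_⟩
        rw [if_neg (by omega), if_pos (by omega)]
        congr 1
    · rintro ⟨i, hi, rfl⟩
      split_ifs with e1 e2
      · exact ha
      · exact hfS _ (by omega)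
      · exact hb
  · -- adjacency
    intro i hi j hj
    simp only []
    have ci : i = 0 ∨ (1 ≤ i ∧ i ≤ m) ∨ i = m + 1 := by omega
    have cj : j = 0 ∨ (1 ≤ j ∧ j ≤ m) ∨ j = m + 1 := by omega
    rcases ci with rfl | ⟨hi1, hi2⟩ | rfl <;> rcases cj with rfl | ⟨hj1, hj2⟩ | rfl
    · simp only [if_pos rfl, G.irrefl, false_iff]
      omega
    · rw [if_pos rfl, if_neg (by omega), if_pos (by omega)]
      constructor
      · intro h
        have := hAonly _ (by omega) h
        omega
      · intro h
        have hj1' : j = 1 := by omega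
        subst hj1'
        simpa using h1
    · rw [if_pos rfl, if_neg (by omega), if_neg (by omega)]
      constructor
      · intro h
        exact absurd h hab'
      · intro h
        omega
    · rw [if_pos rfl, if_neg (by omega), if_pos (by omega)]
      constructor
      · intro h
        have := hAonly _ (by omega) h.symm
        omega
      · intro h
        have hi1' : i = 1 := by omega
        subst hi1'
        simpa using h1.symm
    · rw [if_neg (by omega), if_pos (by omega), if_neg (by omega), if_pos (by omega)]
      rw [hadj _ (by omega) _ (by omega)]
      omega
    · rw [if_neg (by omega), if_pos (by omega), if_neg (by omega), if_neg (by omega)]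
      constructor
      · intro h
        have := hBonly _ (by omega) h.symm
        omega
      · intro h
        have : i = m := by omega
        subst this
        simpa using hB.symm
    · rw [if_neg (by omega), if_neg (by omega), if_pos rfl]
      constructor
      · intro h
        exact absurd h.symm hab'
      · intro h
        omega
    · rw [if_neg (by omega), if_neg (by omega), if_neg (by omega), if_pos (by omega)]
      constructor
      · intro h
        have := hBonly _ (by omega) h
        omega
      · intro h
        have : j = m := by omega
        subst this
        simpa using hB
    · rw [if_neg (by omega), if_neg (by omega)]
      simp only [G.irrefl, false_iff]
      omega


lemma mem_nbhd_f_iff (hpath : IsPathOn G (S \ {a, b}) m f) {t s : ℕ} (ht : t < m) (hs : s < m) :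
    f s ∈ closedNbhd G S (f t) ↔ (s = t ∨ s + 1 = t ∨ t + 1 = s) := by
  constructor
  · rintro ⟨-, heq | hadj⟩
    · exact Or.inl (hpath.1 _ hs _ ht heq)
    · rcases (hpath.2.2 _ hs _ ht).mp hadj with h | h
      · exact Or.inr (Or.inl h)
      · exact Or.inr (Or.inr h)
  · intro h
    refine ⟨(pathT_mem hpath hs).1, ?_⟩
    rcases h with rfl | h | h
    · exact Or.inl rfl
    · exact Or.inr ((hpath.2.2 _ hs _ ht).mpr (Or.inl h))
    · exact Or.inr ((hpath.2.2 _ hs _ ht).mpr (Or.inr h))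

lemma corner_mem_nbhd_f (hpath : IsPathOn G (S \ {a, b}) m f) {t : ℕ} (ht : t < m)
    {x : V} (hxS : x ∈ S) (hx : x = a ∨ x = b) :
    x ∈ closedNbhd G S (f t) ↔ G.Adj x (f t) := by
  constructor
  · rintro ⟨-, heq | hadj⟩
    · exfalso
      obtain ⟨-, h1, h2⟩ := pathT_mem hpath ht
      rcases hx with rfl | rfl
      · exact h1 heq.symm
      · exact h2 heq.symm
    · exact hadj
  · intro h
    exact ⟨hxS, Or.inr h⟩

lemma exists_end (hab : a ≠ b) (hcor : {v | StrictCorner G S v} = {a, b})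
    (hpath : IsPathOn G (S \ {a, b}) m f) (hm3 : 3 ≤ m) :
    ∃ x, (x = a ∨ x = b) ∧ G.Adj x (f 0) ∧ ¬ G.Adj x (f 1) := by
  by_contra hno
  push_neg at hno
  apply not_corner_f hcor hpath (show 0 < m by omega)
  refine ⟨(pathT_mem hpath (by omega : 0 < m)).1, f 1,
    (pathT_mem hpath (by omega : 1 < m)).1, ?_, ?_⟩
  · intro h
    have := hpath.1 _ (by omega) _ (by omega) h
    omega
  · rw [Set.ssubset_def]
    constructor
    · rintro u ⟨huS, hrel⟩
      rcases mem_S_cases hpath huS with hua | hub | ⟨t, ht, rfl⟩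
      · rcases hrel with heq | hadj
        · rw [hua] at heq
          exact absurd heq.symm (pathT_mem hpath (by omega : 0 < m)).2.1
        · exact ⟨huS, Or.inr (hno u (Or.inl hua) hadj)⟩
      · rcases hrel with heq | hadj
        · rw [hub] at heq
          exact absurd heq.symm (pathT_mem hpath (by omega : 0 < m)).2.2
        · exact ⟨huS, Or.inr (hno u (Or.inr hub) hadj)⟩
      · have h0' : f t ∈ closedNbhd G S (f 0) := ⟨huS, hrel⟩
        rw [mem_nbhd_f_iff hpath (show 0 < m by omega) ht] at h0'
        rw [mem_nbhd_f_iff hpath (show 1 < m by omega) ht]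
        omega
    · intro hsub
      have h2 : f 2 ∈ closedNbhd G S (f 1) := by
        rw [mem_nbhd_f_iff hpath (by omega) (by omega)]
        omega
      have := hsub h2
      rw [mem_nbhd_f_iff hpath (by omega) (by omega)] at this
      omega

lemma no_both_ends (hab : a ≠ b) (hcor : {v | StrictCorner G S v} = {a, b})
    (hpath : IsPathOn G (S \ {a, b}) m f) (hm3 : 3 ≤ m)
    (h0 : G.Adj a (f 0)) (hm1 : G.Adj a (f (m - 1))) (h1 : ¬ G.Adj a (f 1)) : False := by
  obtain ⟨haS, w, hwS, hwne, hss⟩ := corner_a hcor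
  have hbS : b ∈ S := (corner_b hcor).1
  have hf0a : f 0 ∈ closedNbhd G S a :=
    ⟨(pathT_mem hpath (by omega : 0 < m)).1, Or.inr h0.symm⟩
  have hfma : f (m - 1) ∈ closedNbhd G S a :=
    ⟨(pathT_mem hpath (by omega : m - 1 < m)).1, Or.inr hm1.symm⟩
  have haa : a ∈ closedNbhd G S a := ⟨haS, Or.inl rfl⟩
  have key : ∀ t, t < m → f 0 ∈ closedNbhd G S (f t) →
      f (m - 1) ∈ closedNbhd G S (f t) → a ∈ closedNbhd G S (f t) → False := by
    intro t ht k0 km ka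
    rw [mem_nbhd_f_iff hpath ht (by omega)] at k0
    rw [mem_nbhd_f_iff hpath ht (by omega)] at km
    rw [corner_mem_nbhd_f hpath ht haS (Or.inl rfl)] at ka
    have ht1 : t = 1 ∧ m = 3 := by omega
    rw [ht1.1] at ka
    exact h1 ka
  rcases mem_S_cases hpath hwS with rfl | rfl | ⟨t, ht, rfl⟩
  · exact hwne rfl
  · -- w = b : N a ⊆ N b
    have hsub := hss.subset
    obtain ⟨hbS', w', hw'S, hw'ne, hss'⟩ := corner_b hcor
    have hf0b := hsub hf0a
    have hfmb := hsub hfma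
    have hab' := hsub haa
    rcases mem_S_cases hpath hw'S with rfl | rfl | ⟨t, ht, rfl⟩
    · exact ssubset_irrefl _ (hss.trans hss')
    · exact hw'ne rfl
    · exact key t ht (hss'.subset hf0b) (hss'.subset hfmb) (hss'.subset hab')
  · exact key t ht (hss.subset hf0a) (hss.subset hfma) (hss.subset haa)

lemma nbr_unique (hab : a ≠ b) (hcor : {v | StrictCorner G S v} = {a, b})
    (hpath : IsPathOn G (S \ {a, b}) m f) (hm3 : 3 ≤ m)
    (h0 : G.Adj a (f 0)) (h1 : ¬ G.Adj a (f 1))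
    (hb0 : ¬ G.Adj b (f 0)) (hab' : ¬ G.Adj a b) :
    ∀ t < m, G.Adj a (f t) → t = 0 := by
  obtain ⟨haS, w, hwS, hwne, hss⟩ := corner_a hcor
  have hbS : b ∈ S := (corner_b hcor).1
  have haa : a ∈ closedNbhd G S a := ⟨haS, Or.inl rfl⟩
  have hf0a : f 0 ∈ closedNbhd G S a :=
    ⟨(pathT_mem hpath (by omega : 0 < m)).1, Or.inr h0.symm⟩
  have hw0 : w = f 0 := by
    rcases mem_S_cases hpath hwS with rfl | rfl | ⟨t, ht, rfl⟩
    · exact absurd rfl hwne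
    · -- w = b
      have := hss.subset haa
      rcases this.2 with heq | hadj
      · exact absurd heq hab
      · exact absurd hadj hab'
    · have k0 := hss.subset hf0a
      rw [mem_nbhd_f_iff hpath ht (by omega)] at k0
      have ka := hss.subset haa
      rw [corner_mem_nbhd_f hpath ht haS (Or.inl rfl)] at ka
      have ht0 : t = 0 ∨ t = 1 := by omega
      rcases ht0 with rfl | rfl
      · rfl
      · exact absurd ka h1
  subst hw0
  intro t ht hadj
  have : f t ∈ closedNbhd G S a :=
    ⟨(pathT_mem hpath ht).1, Or.inr hadj.symm⟩
  have := hss.subset this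
  rw [mem_nbhd_f_iff hpath (by omega) ht] at this
  have ht01 : t = 0 ∨ t = 1 := by omega
  rcases ht01 with rfl | rfl
  · rfl
  · exact absurd hadj h1


lemma step3_core (hab : a ≠ b) (hcor : {v | StrictCorner G S v} = {a, b})
    (hpath : IsPathOn G (S \ {a, b}) m f) (hm3 : 3 ≤ m)
    (hA0 : G.Adj a (f 0)) (hA1 : ¬ G.Adj a (f 1)) :
    ∃ g : ℕ → V, IsPathOn G S (m + 2) g := by
  have haS : a ∈ S := (corner_a hcor).1
  have hbS : b ∈ S := (corner_b hcor).1
  have hcor' : {v | StrictCorner G S v} = {b, a} := by rw [hcor, Set.pair_comm]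
  have hpath' : IsPathOn G (S \ {b, a}) m f := by rw [Set.pair_comm b a]; exact hpath
  have hrev : IsPathOn G (S \ {a, b}) m (fun i => f (m - 1 - i)) := hpath.reverse
  have hrev' : IsPathOn G (S \ {b, a}) m (fun i => f (m - 1 - i)) := hpath'.reverse
  -- the other endpoint is attached to b
  obtain ⟨y, hy, hy0, hy1⟩ := exists_end hab hcor hrev hm3
  simp only [Nat.sub_zero] at hy0
  simp only [show m - 1 - 1 = m - 2 from by omega] at hy1
  rcases hy with rfl | rfl
  · exact absurd (no_both_ends hab hcor hpath hm3 hA0 hy0 hA1) id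
  have hB : G.Adj y (f (m - 1)) := hy0
  have hB' : ¬ G.Adj y (f (m - 2)) := hy1
  have hAm : ¬ G.Adj a (f (m - 1)) := fun h => no_both_ends hab hcor hpath hm3 hA0 h hA1
  have hB0 : ¬ G.Adj y (f 0) := by
    intro h
    refine no_both_ends hab.symm hcor' hrev' hm3 ?_ ?_ ?_
    · simpa using hB
    · simp only [show m - 1 - (m - 1) = 0 from by omega]
      exact h
    · simpa only [show m - 1 - 1 = m - 2 from by omega] using hB'
  have hab' : ¬ G.Adj a y := by
    intro hadj
    obtain ⟨haS', w, hwS, hwne, hss⟩ := corner_a hcor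
    have haa : a ∈ closedNbhd G S a := ⟨haS, Or.inl rfl⟩
    have hya : y ∈ closedNbhd G S a := ⟨hbS, Or.inr hadj.symm⟩
    have hf0a : f 0 ∈ closedNbhd G S a :=
      ⟨(pathT_mem hpath (by omega : 0 < m)).1, Or.inr hA0.symm⟩
    rcases mem_S_cases hpath hwS with rfl | rfl | ⟨t, ht, rfl⟩
    · exact hwne rfl
    · have := hss.subset hf0a
      rcases this.2 with heq | h
      · exact (pathT_mem hpath (by omega : 0 < m)).2.2 heq
      · exact hB0 h.symm
    · have k0 := hss.subset hf0a
      rw [mem_nbhd_f_iff hpath ht (by omega)] at k0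
      have ka := hss.subset haa
      rw [corner_mem_nbhd_f hpath ht haS (Or.inl rfl)] at ka
      have ht' : t = 0 ∨ t = 1 := by omega
      rcases ht' with rfl | rfl
      · have ky := hss.subset hya
        rcases ky.2 with heq | h
        · exact (pathT_mem hpath (by omega : 0 < m)).2.2 heq.symm
        · exact hB0 h
      · exact hA1 ka
  have hAonly : ∀ t < m, G.Adj a (f t) → t = 0 :=
    nbr_unique hab hcor hpath hm3 hA0 hA1 hB0 hab'
  have hBonly' : ∀ t < m, G.Adj y ((fun i => f (m - 1 - i)) t) → t = 0 := by
    refine nbr_unique hab.symm hcor' hrev' hm3 ?_ ?_ ?_ ?_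
    · simpa using hB
    · simpa only [show m - 1 - 1 = m - 2 from by omega] using hB'
    · simpa using hAm
    · intro h
      exact hab' h.symm
  have hBonly : ∀ t < m, G.Adj y (f t) → t = m - 1 := by
    intro t ht h
    have h' : G.Adj y ((fun i => f (m - 1 - i)) (m - 1 - t)) := by
      simp only [show m - 1 - (m - 1 - t) = t from by omega]
      exact h
    have := hBonly' (m - 1 - t) (by omega) h'
    omega
  exact ⟨_, build_path hab hpath haS hbS (by omega) hA0 hB hab' hAonly hBonly⟩

lemma step_three (hab : a ≠ b) (hcor : {v | StrictCorner G S v} = {a, b})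
    (hpath : IsPathOn G (S \ {a, b}) m f) (hm3 : 3 ≤ m) :
    ∃ g : ℕ → V, IsPathOn G S (m + 2) g := by
  obtain ⟨x, hx, hx0, hx1⟩ := exists_end hab hcor hpath hm3
  rcases hx with rfl | rfl
  · exact step3_core hab hcor hpath hm3 hx0 hx1
  · have hcor' : {v | StrictCorner G S v} = {x, a} := by rw [hcor, Set.pair_comm]
    have hpath' : IsPathOn G (S \ {x, a}) m f := by rw [Set.pair_comm x a]; exact hpath
    exact step3_core hab.symm hcor' hpath' hm3 hx0 hx1

lemma step_one (hab : a ≠ b) (hcor : {v | StrictCorner G S v} = {a, b})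
    (hpath : IsPathOn G (S \ {a, b}) 1 f) :
    ∃ g : ℕ → V, IsPathOn G S 3 g := by
  have haS : a ∈ S := (corner_a hcor).1
  have hbS : b ∈ S := (corner_b hcor).1
  have hzS : f 0 ∈ S := (pathT_mem hpath (by omega : (0:ℕ) < 1)).1
  have hza : f 0 ≠ a := (pathT_mem hpath (by omega : (0:ℕ) < 1)).2.1
  have hzb : f 0 ≠ b := (pathT_mem hpath (by omega : (0:ℕ) < 1)).2.2
  have hScases : ∀ u ∈ S, u = a ∨ u = b ∨ u = f 0 := by
    intro u hu
    rcases mem_S_cases hpath hu with h | h | ⟨t, ht, h⟩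
    · exact Or.inl h
    · exact Or.inr (Or.inl h)
    · have : t = 0 := by omega
      rw [this] at h
      exact Or.inr (Or.inr h)
  obtain ⟨-, w, hwS, hwne, hss⟩ := corner_a hcor
  obtain ⟨-, w', hw'S, hw'ne, hss'⟩ := corner_b hcor
  have haa : a ∈ closedNbhd G S a := ⟨haS, Or.inl rfl⟩
  have hbb : b ∈ closedNbhd G S b := ⟨hbS, Or.inl rfl⟩
  -- case analysis on the cornerers
  have hwcase : w = b ∨ w = f 0 := by
    rcases hScases w hwS with h | h | h
    · exact absurd h hwne
    · exact Or.inl h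
    · exact Or.inr h
  have hw'case : w' = a ∨ w' = f 0 := by
    rcases hScases w' hw'S with h | h | h
    · exact Or.inl h
    · exact absurd h hw'ne
    · exact Or.inr h
  -- mutual cornering is impossible; chains are impossible
  have hmain : G.Adj a (f 0) ∧ G.Adj b (f 0) ∧ ¬ G.Adj a b := by
    rcases hwcase with hw | hw <;> rw [hw] at hss
    · -- N a ⊂ N b
      exfalso
      have hadjab : G.Adj a b := by
        have := hss.subset haa
        rcases this.2 with h | h
        · exact absurd h hab
        · exact h
      have hba : b ∈ closedNbhd G S a := ⟨hbS, Or.inr hadjab.symm⟩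
      rcases hw'case with hw' | hw' <;> rw [hw'] at hss'
      · exact ssubset_irrefl _ (hss.trans hss')
      · -- N a ⊂ N b ⊂ N (f 0)
        obtain ⟨u, hub, hua⟩ := Set.exists_of_ssubset hss
        have huz : u = f 0 := by
          rcases hScases u hub.1 with rfl | rfl | h
          · exact absurd haa hua
          · exact absurd hba hua
          · exact h
        subst huz
        obtain ⟨u', hu'z, hu'b⟩ := Set.exists_of_ssubset hss'
        rcases hScases u' hu'z.1 with rfl | rfl | h
        · exact hu'b (hss.subset haa)
        · exact hu'b hbb
        · rw [h] at hu'b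
          exact hu'b hub
    · rcases hw'case with hw' | hw' <;> rw [hw'] at hss'
      · -- N b ⊂ N a ⊂ N (f 0)
        exfalso
        have hadjba : G.Adj b a := by
          have := hss'.subset hbb
          rcases this.2 with h | h
          · exact absurd h hab.symm
          · exact h
        have hba : b ∈ closedNbhd G S a := ⟨hbS, Or.inr hadjba⟩
        have hapa : a ∈ closedNbhd G S b := ⟨haS, Or.inr hadjba.symm⟩
        obtain ⟨u, hua, hub⟩ := Set.exists_of_ssubset hss'
        have huz : u = f 0 := by
          rcases hScases u hua.1 with rfl | rfl | h
          · exact absurd hapa hub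
          · exact absurd hbb hub
          · exact h
        subst huz
        obtain ⟨u', hu'z, hu'a⟩ := Set.exists_of_ssubset hss
        rcases hScases u' hu'z.1 with rfl | rfl | h
        · exact hu'a haa
        · exact hu'a hba
        · rw [h] at hu'a
          exact hu'a hua
      · -- both cornered by f 0 : the good case
        have hAz : G.Adj a (f 0) := by
          have := hss.subset haa
          rcases this.2 with h | h
          · exact absurd h (Ne.symm hza)
          · exact h
        have hBz : G.Adj b (f 0) := by
          have := hss'.subset hbb
          rcases this.2 with h | h
          · exact absurd h (Ne.symm hzb)
          · exact h
        refine ⟨hAz, hBz, ?_⟩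
        intro hadj
        have hSsubNa : S ⊆ closedNbhd G S a := by
          intro u hu
          rcases hScases u hu with rfl | rfl | rfl
          · exact haa
          · exact ⟨hu, Or.inr hadj.symm⟩
          · exact ⟨hu, Or.inr hAz.symm⟩
        have hsubS : closedNbhd G S (f 0) ⊆ S := fun u hu => hu.1
        exact hss.not_subset (hsubS.trans hSsubNa)
  obtain ⟨hAz, hBz, hab'⟩ := hmain
  exact ⟨_, build_path hab hpath haS hbS le_rfl hAz hBz hab'
    (fun t ht _ => by omega) (fun t ht _ => by omega)⟩

lemma step_lemma (hab : a ≠ b) (hcor : {v | StrictCorner G S v} = {a, b})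
    (hpath : IsPathOn G (S \ {a, b}) m f) (hm : m = 1 ∨ 3 ≤ m) :
    ∃ g : ℕ → V, IsPathOn G S (m + 2) g := by
  rcases hm with rfl | hm3
  · exact step_one hab hcor hpath
  · exact step_three hab hcor hpath hm3

end Step


lemma realizes_unique {α : ℕ} (hα : 2 ≤ α)
    (hreal : Realizes G (1 :: List.replicate (α - 1) 2)) :
    ∃ f : ℕ → V, IsPathOn G Set.univ (2 * α - 1) f := by
  obtain ⟨hcw, hrank, hcount⟩ := hreal
  have hlen : (1 :: List.replicate (α - 1) 2).length = α := by
    simp [List.length_replicate]; omega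
  rw [hlen] at hrank
  -- counts
  have htop : {v | cornerRank G v = (α : ℕ∞)}.ncard = 1 := by
    have h0 := hcount ⟨0, by rw [hlen]; omega⟩
    simp only [List.get] at h0
    have he : ((1 :: List.replicate (α - 1) 2).length - 0 : ℕ) = α := by rw [hlen]; omega
    rw [he] at h0
    exact h0.symm
  have hcnt : ∀ k, 1 ≤ k → k ≤ α - 1 → {v | cornerRank G v = (k : ℕ∞)}.ncard = 2 := by
    intro k hk1 hk2
    obtain ⟨j, hj⟩ : ∃ j, α - k = j + 1 := ⟨α - k - 1, by omega⟩
    have h2 := hcount ⟨j + 1, by rw [hlen]; omega⟩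
    have hget : (1 :: List.replicate (α - 1) 2).get ⟨j + 1, by rw [hlen]; omega⟩ = 2 := by
      simp [List.get_eq_getElem, List.getElem_replicate]
    rw [hget] at h2
    have he : ((1 :: List.replicate (α - 1) 2).length - (j + 1) : ℕ) = k := by
      rw [hlen]; omega
    rw [he] at h2
    exact h2.symm
  have hstageα : stage G α = {v | cornerRank G v = (α : ℕ∞)} :=
    stage_graphRank_eq (by omega) hrank hcw
  obtain ⟨z, hz⟩ := Set.ncard_eq_one.mp htop
  have hbase : IsPathOn G (stage G α) 1 (fun _ => z) := by
    refine ⟨fun i hi j hj _ => by omega, ?_, fun i hi j hj => ?_⟩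
    · rw [hstageα, hz]
      ext u
      simp only [Set.mem_singleton_iff, Set.mem_image, Set.mem_Iio]
      exact ⟨fun h => ⟨0, by omega, h.symm⟩, fun ⟨t, _, h⟩ => h.symm⟩
    · have : i = 0 := by omega
      have : j = 0 := by omega
      subst this
      simp only [G.irrefl, false_iff]
      omega
  have main : ∀ d, d ≤ α - 1 → ∃ f, IsPathOn G (stage G (α - d)) (2 * d + 1) f := by
    intro d
    induction d with
    | zero =>
      intro _
      exact ⟨fun _ => z, by simpa using hbase⟩
    | succ d ih =>
      intro hd
      obtain ⟨f, hf⟩ := ih (by omega)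
      set k := α - (d + 1) with hkdef
      have hk1 : 1 ≤ k := by omega
      have hk2 : k ≤ α - 1 := by omega
      have hcorners : {v | StrictCorner G (stage G k) v}
          = {v | cornerRank G v = (k : ℕ∞)} := by
        refine corners_stage_eq hk1 ?_
        rw [hrank]
        exact_mod_cast (by omega : k < α)
      obtain ⟨a, b, hab, habs⟩ := Set.ncard_eq_two.mp (hcnt k hk1 hk2)
      have hcor2 : {v | StrictCorner G (stage G k) v} = {a, b} := by
        rw [hcorners, habs]
      have hstage : stage G (k + 1) = stage G k \ {a, b} := by
        rw [stage_succ k hk1, hcor2]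
      have hTset : stage G k \ {a, b} = stage G (α - d) := by
        rw [← hstage, show k + 1 = α - d from by omega]
      have hfT : IsPathOn G (stage G k \ {a, b}) (2 * d + 1) f := by
        rw [hTset]
        exact hf
      obtain ⟨g, hg⟩ := step_lemma hab hcor2 hfT (by omega)
      refine ⟨g, ?_⟩
      have : 2 * d + 1 + 2 = 2 * (d + 1) + 1 := by omega
      rw [← this]
      exact hg
  obtain ⟨f, hf⟩ := main (α - 1) le_rfl
  have h1 : α - (α - 1) = 1 := by omega
  have h2 : 2 * (α - 1) + 1 = 2 * α - 1 := by omega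
  rw [h1, h2] at hf
  rw [show stage G 1 = Set.univ from rfl] at hf
  exact ⟨f, hf⟩

lemma isPathOn_iso {n : ℕ} (hn : 0 < n) {f : ℕ → V}
    (hf : IsPathOn G Set.univ n f) :
    Nonempty (G ≃g SimpleGraph.pathGraph n) := by
  have hbij : Function.Bijective (fun i : Fin n => f i.val) := by
    constructor
    · intro i j hij
      exact Fin.ext (hf.1 _ i.isLt _ j.isLt hij)
    · intro v
      obtain ⟨t, ht, rfl⟩ := hf.mem_iff.mp (Set.mem_univ v)
      exact ⟨⟨t, ht⟩, rfl⟩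
  exact ⟨SimpleGraph.Iso.symm
    { toEquiv := Equiv.ofBijective _ hbij
      map_rel_iff' := fun {i j} => by
        show G.Adj (f i.val) (f j.val) ↔ _
        rw [hf.2.2 _ i.isLt _ j.isLt, SimpleGraph.pathGraph_adj] }⟩

lemma pathGraph_isPathOn (n : ℕ) (hn : 0 < n) :
    IsPathOn (SimpleGraph.pathGraph n) Set.univ n
      (fun i => (⟨min i (n - 1), by omega⟩ : Fin n)) := by
  refine ⟨fun i hi j hj hij => ?_, ?_, fun i hi j hj => ?_⟩
  · have := congrArg Fin.val hij
    simp only [] at this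
    omega
  · ext v
    simp only [Set.mem_univ, true_iff, Set.mem_image, Set.mem_Iio, iff_true]
    refine ⟨v.val, v.isLt, ?_⟩
    apply Fin.ext
    simp only []
    omega
  · rw [SimpleGraph.pathGraph_adj]
    simp only []
    omega


end CopsRobbersAux

end CopsRobbers
/-- for `α ≥ 2`, the vector `(1, 2, …, 2)` of length `α` is uniquely realized
by the path on `2α - 1` vertices. -/
theorem CopsRobbers.one_twos_uniquely_realized_by_path (α : ℕ) (hα : 2 ≤ α) :
    CopsRobbers.Realizes (SimpleGraph.pathGraph (2 * α - 1))
      (1 :: List.replicate (α - 1) 2) ∧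
    ∀ (W : Type) (_ : Fintype W) (G : SimpleGraph W),
      CopsRobbers.Realizes G (1 :: List.replicate (α - 1) 2) →
      Nonempty (G ≃g SimpleGraph.pathGraph (2 * α - 1)) := by
  constructor
  · exact CopsRobbers.path_realizes
      (CopsRobbers.pathGraph_isPathOn (2 * α - 1) (by omega)) rfl hα
  · intro W _ G hreal
    obtain ⟨f, hf⟩ := CopsRobbers.realizes_unique hα hreal
    exact CopsRobbers.isPathOn_iso (by omega) hf
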